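/- Let m, n ≥ 1, let A be an m×m complex matrix, C an n×n complex matrix, and B an m×n complex matrix. If the (m+n)×(m+n) block upper-triangular matrix fromBlocks A B 0 C is diagonalizable (i.e. equal to P * Δ * P⁻¹ for some invertible P and diagonal Δ), then A is diagonalizable and C is diagonalizable. -/

import Mathlib

set_option maxHeartbeats 1000000
set_option synthInstance.maxHeartbeats 200000

open Matrix Polynomial Module

noncomputable section

/-- Conjugation by a unit as an algebra homomorphism. -/
def conjAlgHom {A : Type*} [Ring A] [Algebra ℂ A] (u : Aˣ) : A →ₐ[ℂ] A where
  toFun x := ↑u * x * ↑u⁻¹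
  map_one' := by simp
  map_mul' x y := by
    simp only [mul_assoc]
    congr 1
    simp [← mul_assoc]
  map_zero' := by simp
  map_add' x y := by simp [mul_add, add_mul]
  commutes' r := by
    simp [Algebra.algebraMap_eq_smul_one, mul_smul_comm, smul_mul_assoc]

lemma aux_pow_blocks {m n : ℕ} (A : Matrix (Fin m) (Fin m) ℂ) (C : Matrix (Fin n) (Fin n) ℂ)
    (B : Matrix (Fin m) (Fin n) ℂ) (k : ℕ) :
    ∃ B', (fromBlocks A B 0 C) ^ k = fromBlocks (A ^ k) B' 0 (C ^ k) := by
  induction k with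
  | zero => exact ⟨0, by simp [Matrix.fromBlocks_one]⟩
  | succ k ih =>
    obtain ⟨B', hB'⟩ := ih
    refine ⟨A ^ k * B + B' * C, ?_⟩
    rw [pow_succ, pow_succ, pow_succ, hB', fromBlocks_multiply]
    simp

lemma aux_aeval_blocks {m n : ℕ} (A : Matrix (Fin m) (Fin m) ℂ) (C : Matrix (Fin n) (Fin n) ℂ)
    (B : Matrix (Fin m) (Fin n) ℂ) (p : ℂ[X]) :
    ∃ B', aeval (fromBlocks A B 0 C) p = fromBlocks (aeval A p) B' 0 (aeval C p) := by
  induction p using Polynomial.induction_on' with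
  | add p q hp hq =>
    obtain ⟨B1, h1⟩ := hp
    obtain ⟨B2, h2⟩ := hq
    exact ⟨B1 + B2, by simp [h1, h2, Matrix.fromBlocks_add]⟩
  | monomial k a =>
    obtain ⟨B', hB'⟩ := aux_pow_blocks A C B k
    refine ⟨a • B', ?_⟩
    simp only [aeval_monomial, hB', Algebra.algebraMap_eq_smul_one, smul_mul_assoc, one_mul]
    rw [Matrix.fromBlocks_smul]
    simp

/-- A square complex matrix annihilated by a squarefree polynomial is diagonalizable. -/
lemma aux_diag {m : ℕ} (A : Matrix (Fin m) (Fin m) ℂ) (p : ℂ[X]) (hp : Squarefree p)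
    (h0 : aeval A p = 0) :
    ∃ (P : Matrix (Fin m) (Fin m) ℂ) (d : Fin m → ℂ),
      IsUnit P ∧ A = P * Matrix.diagonal d * P⁻¹ := by
  set f : Module.End ℂ (Fin m → ℂ) := Matrix.toLin' A with hf
  have hfa : aeval f p = 0 := by
    have h1 := aeval_algHom_apply (Matrix.toLinAlgEquiv' (R := ℂ) (n := Fin m)).toAlgHom A p
    simp only [AlgEquiv.coe_toAlgHom] at h1
    rw [hf, show (Matrix.toLin' A : Module.End ℂ (Fin m → ℂ)) = Matrix.toLinAlgEquiv' A from rfl,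
      h1, h0, map_zero]
  have hss : f.IsSemisimple := Module.End.isSemisimple_of_squarefree_aeval_eq_zero hp hfa
  have htop : ⨆ μ, f.eigenspace μ = ⊤ := by
    have h1 := Module.End.iSup_maxGenEigenspace_eq_top f
    have h2 : ∀ μ, f.maxGenEigenspace μ = f.eigenspace μ := fun μ =>
      hss.isFinitelySemisimple.maxGenEigenspace_eq_eigenspace μ
    simpa [h2] using h1
  have hind := Module.End.eigenspaces_iSupIndep f
  have hint : DirectSum.IsInternal (fun μ : ℂ => f.eigenspace μ) :=
    DirectSum.isInternal_submodule_of_iSupIndep_of_iSup_eq_top hind htop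
  let bsub : ∀ μ : ℂ, Basis (Fin (finrank ℂ (f.eigenspace μ))) ℂ (f.eigenspace μ) :=
    fun μ => Module.finBasis ℂ (f.eigenspace μ)
  let b0 := hint.collectedBasis bsub
  have hb0mem : ∀ i, b0 i ∈ f.eigenspace i.1 := fun i => hint.collectedBasis_mem bsub i
  letI : Fintype (Σ μ : ℂ, Fin (finrank ℂ (f.eigenspace μ))) :=
    FiniteDimensional.fintypeBasisIndex b0
  have hcard : Fintype.card (Σ μ : ℂ, Fin (finrank ℂ (f.eigenspace μ))) = m := by
    rw [← Module.finrank_eq_card_basis b0]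
    simp
  let e := Fintype.equivFinOfCardEq hcard
  let b := b0.reindex e
  let d : Fin m → ℂ := fun i => (e.symm i).1
  have heig : ∀ i, f (b i) = d i • b i := by
    intro i
    have := hb0mem (e.symm i)
    rw [Module.End.mem_eigenspace_iff] at this
    simpa [b, d] using this
  have hD : LinearMap.toMatrix b b f = Matrix.diagonal d := by
    ext i j
    rw [LinearMap.toMatrix_apply, heig j, _root_.map_smul, Basis.repr_self]
    simp only [Finsupp.smul_single, smul_eq_mul, mul_one, Finsupp.single_apply,
      Matrix.diagonal_apply]
    by_cases hij : i = j
    · subst hij; simp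
    · rw [if_neg (fun h => hij h.symm), if_neg hij]
  let s := Pi.basisFun ℂ (Fin m)
  have hA : LinearMap.toMatrix s s f = A := by
    rw [hf, ← Matrix.toLin_eq_toLin' ]
    exact LinearMap.toMatrix_toLin s s A
  have key : s.toMatrix b * Matrix.diagonal d * b.toMatrix s = A := by
    rw [← hD, ← hA]
    exact basis_toMatrix_mul_linearMap_toMatrix_mul_basis_toMatrix s b s b f
  have hPQ : s.toMatrix b * b.toMatrix s = 1 := by
    rw [Basis.toMatrix_mul_toMatrix_flip]
  have hQP : b.toMatrix s * s.toMatrix b = 1 := by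
    rw [Basis.toMatrix_mul_toMatrix_flip]
  refine ⟨s.toMatrix b, d, ⟨⟨s.toMatrix b, b.toMatrix s, hPQ, hQP⟩, rfl⟩, ?_⟩
  rw [Matrix.inv_eq_right_inv hPQ] at *
  · exact key.symm

/-- If a block upper-triangular matrix `fromBlocks A B 0 C` is diagonalizable, then so are
its diagonal blocks `A` and `C` (restriction/quotient principle, Section 4). -/
theorem blockTriangular_diagonalizable (m n : ℕ) (hm : 1 ≤ m) (hn : 1 ≤ n)
    (A : Matrix (Fin m) (Fin m) ℂ) (C : Matrix (Fin n) (Fin n) ℂ)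
    (B : Matrix (Fin m) (Fin n) ℂ)
    (h : ∃ (P : Matrix (Fin m ⊕ Fin n) (Fin m ⊕ Fin n) ℂ) (d : Fin m ⊕ Fin n → ℂ),
        IsUnit P ∧ fromBlocks A B 0 C = P * Matrix.diagonal d * P⁻¹) :
    (∃ (P : Matrix (Fin m) (Fin m) ℂ) (d : Fin m → ℂ),
        IsUnit P ∧ A = P * Matrix.diagonal d * P⁻¹)
      ∧ (∃ (P : Matrix (Fin n) (Fin n) ℂ) (d : Fin n → ℂ),
        IsUnit P ∧ C = P * Matrix.diagonal d * P⁻¹) := by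
  obtain ⟨P, d, hP, hM⟩ := h
  set p : ℂ[X] := ∏ s ∈ Finset.univ.image d, (X - Polynomial.C s) with hpdef
  have hsf : Squarefree p := by
    refine Polynomial.Separable.squarefree (separable_prod' ?_ ?_)
    · intro x _ y _ hxy
      exact pairwise_coprime_X_sub_C Function.injective_id hxy
    · intro x _
      exact separable_X_sub_C
  have hdzero : aeval (Matrix.diagonal d) p = 0 := by
    have hpi : aeval d p = 0 := by
      funext i
      have h2 := aeval_algHom_apply (Pi.evalAlgHom ℂ (fun _ : Fin m ⊕ Fin n => ℂ) i) d p
      have h3 : aeval (d i) p = 0 := by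
        rw [hpdef, map_prod]
        refine Finset.prod_eq_zero (Finset.mem_image_of_mem d (Finset.mem_univ i)) ?_
        simp
      simp only [Pi.evalAlgHom_apply] at h2
      rw [← h2, h3]; rfl
    have h4 := aeval_algHom_apply
      (Matrix.diagonalAlgHom (n := Fin m ⊕ Fin n) (α := ℂ) ℂ) d p
    have h5 : (Matrix.diagonalAlgHom (n := Fin m ⊕ Fin n) (α := ℂ) ℂ) d
        = Matrix.diagonal d := rfl
    rw [h5] at h4
    rw [h4, hpi, map_zero]
  have hMzero : aeval (fromBlocks A B 0 C) p = 0 := by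
    have h6 := aeval_algHom_apply (conjAlgHom hP.unit) (Matrix.diagonal d) p
    have h7 : (conjAlgHom hP.unit) (Matrix.diagonal d) = fromBlocks A B 0 C := by
      rw [hM]
      show (↑hP.unit : Matrix (Fin m ⊕ Fin n) (Fin m ⊕ Fin n) ℂ) * Matrix.diagonal d * (↑(hP.unit⁻¹) : Matrix (Fin m ⊕ Fin n) (Fin m ⊕ Fin n) ℂ) = P * Matrix.diagonal d * P⁻¹
      rw [hP.unit_spec, Matrix.coe_units_inv, hP.unit_spec]
    rw [h7] at h6
    rw [h6, hdzero]
    show (conjAlgHom hP.unit) 0 = 0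
    exact map_zero _
  obtain ⟨B', hB'⟩ := aux_aeval_blocks A C B p
  rw [hMzero] at hB'
  have hA0 : aeval A p = 0 := by
    ext i j
    have := congrFun (congrFun hB' (Sum.inl i)) (Sum.inl j)
    simpa using this.symm
  have hC0 : aeval C p = 0 := by
    ext i j
    have := congrFun (congrFun hB' (Sum.inr i)) (Sum.inr j)
    simpa using this.symm
  exact ⟨aux_diag A p hsf hA0, aux_diag C p hsf hC0⟩

end
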